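/- arXiv:2302.01364 — 2 statements merged into one kernel-verified Lean document; each statement's English description precedes it below -/
import Mathlib

section
/- Assume the a₁,…,a_m are pairwise distinct. Then for every ξ > 0, r(ξ) = (−ξ)^{m−1} ḡ · φ[ξa₁, …, ξa_m], where ḡ = g₁⋯g_{m−1}, φ(x) = 1/(eˣ − 1), and φ[·,…,·] denotes the divided difference of φ of order m−1 at the (pairwise distinct) points ξa₁,…,ξa_m. -/
open Matrix NormedSpace

/-- The `m×m` matrix with diagonal entries `-a i`, subdiagonal entries `g i`, zero elsewhere. -/
def igoA (m : ℕ) (a : Fin m → ℝ) (g : Fin (m - 1) → ℝ) : Matrix (Fin m) (Fin m) ℝ :=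
  fun i j =>
    if i = j then -a i
    else if h : (i : ℕ) = (j : ℕ) + 1 then g ⟨(j : ℕ), by have := i.isLt; omega⟩
    else 0

/-- The first standard basis vector `e₁` of `ℝ^m`. -/
def igoB (m : ℕ) : Fin m → ℝ := fun i => if (i : ℕ) = 0 then 1 else 0

/-- The last standard basis vector `e_m` of `ℝ^m` (acting as the row `C = e_mᵀ`). -/
def igoC (m : ℕ) : Fin m → ℝ := fun i => if (i : ℕ) = m - 1 then 1 else 0

/-- The divided difference `f[x₀,…,x_k]` of order `k`, defined recursively by
`f[x₀] = f(x₀)` and `f[x₀,…,x_k] = (f[x₁,…,x_k] − f[x₀,…,x_{k−1}])/(x_k − x₀)`. -/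
noncomputable def dividedDiff (f : ℝ → ℝ) : (k : ℕ) → (Fin (k + 1) → ℝ) → ℝ
  | 0, x => f (x 0)
  | k + 1, x =>
      (dividedDiff f k (fun i => x i.succ) - dividedDiff f k (fun i => x i.castSucc)) /
        (x (Fin.last (k + 1)) - x 0)

/-! ### Auxiliary definitions -/

/-- Extension of a `Fin n`-indexed family to `ℕ` (junk value `1` out of range). -/
def dext {n : ℕ} (f : Fin n → ℝ) : ℕ → ℝ := fun i => if h : i < n then f ⟨i, h⟩ else 1

lemma dext_lt {n : ℕ} (f : Fin n → ℝ) {i : ℕ} (h : i < n) : dext f i = f ⟨i, h⟩ := dif_pos h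

lemma dext_fin {n : ℕ} (f : Fin n → ℝ) (i : Fin n) : dext f (i : ℕ) = f i := by
  rw [dext_lt f i.isLt]

/-- The matrix of eigenvectors of `igoA`. -/
noncomputable def igoP (k : ℕ) (a : Fin (k + 1) → ℝ) (g : Fin k → ℝ) :
    Matrix (Fin (k + 1)) (Fin (k + 1)) ℝ :=
  fun i j => if (j : ℕ) ≤ (i : ℕ) then
    ∏ l ∈ Finset.Ico (j : ℕ) (i : ℕ), (dext g l / (dext a (l + 1) - dext a j)) else 0

/-- The inverse of `igoP`. -/
noncomputable def igoQ (k : ℕ) (a : Fin (k + 1) → ℝ) (g : Fin k → ℝ) :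
    Matrix (Fin (k + 1)) (Fin (k + 1)) ℝ :=
  fun i j => if (j : ℕ) ≤ (i : ℕ) then
    ∏ l ∈ Finset.Ico (j : ℕ) (i : ℕ), (dext g l / (dext a l - dext a i)) else 0

section aux

variable {k : ℕ} (a : Fin (k + 1) → ℝ) (g : Fin k → ℝ)

lemma igoP_diag (i : Fin (k + 1)) : igoP k a g i i = 1 := by
  simp [igoP]

lemma igoQ_diag (i : Fin (k + 1)) : igoQ k a g i i = 1 := by
  simp [igoQ]

lemma igoP_zero {i j : Fin (k + 1)} (h : (i : ℕ) < (j : ℕ)) : igoP k a g i j = 0 := by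
  simp only [igoP]; exact if_neg (not_le.mpr h)

lemma igoQ_zero {i j : Fin (k + 1)} (h : (i : ℕ) < (j : ℕ)) : igoQ k a g i j = 0 := by
  simp only [igoQ]; exact if_neg (not_le.mpr h)

lemma igoP_succ {t : ℕ} (h1 : t + 1 < k + 1) {c : Fin (k + 1)} (hc : (c : ℕ) ≤ t) :
    igoP k a g ⟨t + 1, h1⟩ c
      = igoP k a g ⟨t, by omega⟩ c * (dext g t / (dext a (t + 1) - dext a c)) := by
  simp only [igoP, if_pos (show (c : ℕ) ≤ t + 1 by omega), if_pos hc]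
  rw [Finset.prod_Ico_succ_top hc]

lemma igoQ_succ {c i : Fin (k + 1)} (hc : (c : ℕ) < (i : ℕ)) (h1 : (c : ℕ) + 1 < k + 1) :
    igoQ k a g i c
      = (dext g c / (dext a c - dext a i)) * igoQ k a g i ⟨(c : ℕ) + 1, h1⟩ := by
  simp only [igoQ, if_pos (show (c : ℕ) ≤ (i : ℕ) by omega),
    if_pos (show (c : ℕ) + 1 ≤ (i : ℕ) by omega)]
  rw [Finset.prod_eq_prod_Ico_succ_bot hc]

end aux
/-! ### Lagrange form of divided differences -/

noncomputable def lagW {n : ℕ} (x : Fin n → ℝ) (j : Fin n) : ℝ :=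
  ∏ l, (if l = j then 1 else (x j - x l))

lemma lagW_ne_zero {n : ℕ} {x : Fin n → ℝ} (hx : Function.Injective x) (j : Fin n) :
    lagW x j ≠ 0 := by
  apply Finset.prod_ne_zero_iff.mpr
  intro l _
  split
  · exact one_ne_zero
  · exact sub_ne_zero.mpr (fun h => ‹¬ l = j› (hx h).symm)

lemma lagW_succ {k : ℕ} (x : Fin (k + 2) → ℝ) (j : Fin (k + 1)) :
    lagW x j.succ = (x j.succ - x 0) * lagW (fun i => x i.succ) j := by
  unfold lagW
  rw [Fin.prod_univ_succ, if_neg (fun h => Fin.succ_ne_zero j h.symm)]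
  congr 1
  exact Finset.prod_congr rfl fun l _ => by simp [Fin.succ_inj]

lemma lagW_castSucc {k : ℕ} (x : Fin (k + 2) → ℝ) (j : Fin (k + 1)) :
    lagW x j.castSucc = (x j.castSucc - x (Fin.last (k + 1))) * lagW (fun i => x i.castSucc) j := by
  unfold lagW
  rw [Fin.prod_univ_castSucc, mul_comm, if_neg (Fin.castSucc_lt_last j).ne']
  congr 1
  exact Finset.prod_congr rfl fun l _ => by simp [Fin.castSucc_inj]

theorem dividedDiff_lagrange (f : ℝ → ℝ) :
    ∀ (k : ℕ) (x : Fin (k + 1) → ℝ), Function.Injective x →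
      dividedDiff f k x = ∑ j, f (x j) * (lagW x j)⁻¹
  | 0, x, _ => by simp [dividedDiff, lagW]
  | (k + 1), x, hx => by
    have h1 : Function.Injective (fun i : Fin (k + 1) => x i.succ) :=
      hx.comp (Fin.succ_injective _)
    have h2 : Function.Injective (fun i : Fin (k + 1) => x i.castSucc) :=
      hx.comp (Fin.castSucc_injective _)
    have hlast : x (Fin.last (k + 1)) - x 0 ≠ 0 :=
      sub_ne_zero.mpr fun h => by
        have := hx h
        exact absurd this (by simp [Fin.ext_iff])
    rw [dividedDiff, dividedDiff_lagrange f k _ h1, dividedDiff_lagrange f k _ h2,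
      div_eq_iff hlast]
    have e1 : ∀ j : Fin (k + 1),
        (lagW (fun i => x i.succ) j)⁻¹ = (x j.succ - x 0) * (lagW x j.succ)⁻¹ := by
      intro j
      have ha : x j.succ - x 0 ≠ 0 :=
        sub_ne_zero.mpr fun h => Fin.succ_ne_zero j (hx h)
      rw [lagW_succ, mul_inv, ← mul_assoc, mul_inv_cancel₀ ha, one_mul]
    have e2 : ∀ j : Fin (k + 1),
        (lagW (fun i => x i.castSucc) j)⁻¹
          = (x j.castSucc - x (Fin.last (k + 1))) * (lagW x j.castSucc)⁻¹ := by
      intro j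
      have ha : x j.castSucc - x (Fin.last (k + 1)) ≠ 0 :=
        sub_ne_zero.mpr fun h => (Fin.castSucc_lt_last j).ne (hx h)
      rw [lagW_castSucc, mul_inv, ← mul_assoc, mul_inv_cancel₀ ha, one_mul]
    simp_rw [e1, e2]
    have s1 : ∑ j : Fin (k + 1), f (x j.succ) * ((x j.succ - x 0) * (lagW x j.succ)⁻¹)
        = ∑ j : Fin (k + 2), f (x j) * ((x j - x 0) * (lagW x j)⁻¹) := by
      conv_rhs => rw [Fin.sum_univ_succ]
      simp
    have s2 : ∑ j : Fin (k + 1),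
        f (x j.castSucc) * ((x j.castSucc - x (Fin.last (k + 1))) * (lagW x j.castSucc)⁻¹)
        = ∑ j : Fin (k + 2), f (x j) * ((x j - x (Fin.last (k + 1))) * (lagW x j)⁻¹) := by
      conv_rhs => rw [Fin.sum_univ_castSucc]
      simp
    rw [s1, s2, ← Finset.sum_sub_distrib, Finset.sum_mul]
    exact Finset.sum_congr rfl fun j _ => by ring
/-! ### Matrix identities -/

section matrices

variable {k : ℕ} (a : Fin (k + 1) → ℝ) (g : Fin k → ℝ)

lemma igoA_mul_igoP (hinj : Function.Injective a) :
    igoA (k + 1) a g * igoP k a g = igoP k a g * Matrix.diagonal (fun i => -a i) := by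
  ext i c
  rw [Matrix.mul_apply, Matrix.mul_diagonal]
  rcases i with ⟨iv, hiv⟩
  match iv, hiv with
  | 0, hiv =>
    rw [Finset.sum_eq_single (⟨0, hiv⟩ : Fin (k + 1))]
    · have : igoA (k + 1) a g ⟨0, hiv⟩ ⟨0, hiv⟩ = -a ⟨0, hiv⟩ := if_pos rfl
      rw [this]
      by_cases hc : c = ⟨0, hiv⟩
      · subst hc; ring
      · rw [igoP_zero a g (Nat.pos_of_ne_zero (fun h => hc (Fin.ext h)))]
        simp
    · intro j _ hj
      have : igoA (k + 1) a g ⟨0, hiv⟩ j = 0 := by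
        unfold igoA
        rw [if_neg (fun h => hj h.symm), dif_neg (by simp)]
      rw [this, zero_mul]
    · intro h; exact absurd (Finset.mem_univ _) h
  | t + 1, hiv =>
    have htk : t < k := by omega
    have tlt : t < k + 1 := by omega
    have hvanish : ∀ j ∈ Finset.univ,
        j ∉ ({(⟨t, tlt⟩ : Fin (k + 1)), ⟨t + 1, hiv⟩} : Finset (Fin (k + 1))) →
        igoA (k + 1) a g ⟨t + 1, hiv⟩ j * igoP k a g j c = 0 := by
      intro j _ hj
      simp only [Finset.mem_insert, Finset.mem_singleton] at hj
      push_neg at hj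
      have h1 : (⟨t + 1, hiv⟩ : Fin (k + 1)) ≠ j := fun h => hj.2 h.symm
      have h2 : ¬ ((t + 1 : ℕ) = (j : ℕ) + 1) := by
        intro h
        exact hj.1 (Fin.ext (show (j : ℕ) = t by omega))
      unfold igoA
      rw [if_neg h1, dif_neg h2, zero_mul]
    rw [← Finset.sum_subset (Finset.subset_univ _) hvanish,
      Finset.sum_pair (show (⟨t, tlt⟩ : Fin (k + 1)) ≠ ⟨t + 1, hiv⟩ by simp [Fin.ext_iff])]
    have hA1 : igoA (k + 1) a g ⟨t + 1, hiv⟩ ⟨t, tlt⟩ = g ⟨t, htk⟩ := by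
      unfold igoA
      rw [if_neg (by simp [Fin.ext_iff]), dif_pos rfl]
    have hA2 : igoA (k + 1) a g ⟨t + 1, hiv⟩ ⟨t + 1, hiv⟩ = -a ⟨t + 1, hiv⟩ := if_pos rfl
    rw [hA1, hA2]
    by_cases hc : (c : ℕ) ≤ t
    · rw [igoP_succ a g hiv hc]
      have hgt : dext g t = g ⟨t, htk⟩ := dext_lt g htk
      have hat : dext a (t + 1) = a ⟨t + 1, hiv⟩ := dext_lt a hiv
      have hac : dext a (c : ℕ) = a c := dext_fin a c
      have hne : a ⟨t + 1, hiv⟩ - a c ≠ 0 := by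
        refine sub_ne_zero.mpr fun h => ?_
        have h3 : (t + 1 : ℕ) = (c : ℕ) := congrArg Fin.val (hinj h)
        omega
      rw [hgt, hat, hac]
      field_simp
      ring
    · rw [igoP_zero a g (show (t : ℕ) < (c : ℕ) by omega), mul_zero, zero_add]
      by_cases hc2 : (c : ℕ) = t + 1
      · have : c = ⟨t + 1, hiv⟩ := Fin.ext hc2
        subst this
        ring
      · rw [igoP_zero a g (show (t + 1 : ℕ) < (c : ℕ) by omega)]
        simp

end matrices
section matrices2

variable {k : ℕ} (a : Fin (k + 1) → ℝ) (g : Fin k → ℝ)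

lemma igoQ_mul_igoA (hinj : Function.Injective a) :
    igoQ k a g * igoA (k + 1) a g = Matrix.diagonal (fun i => -a i) * igoQ k a g := by
  ext i c
  rw [Matrix.mul_apply, Matrix.diagonal_mul]
  rcases c with ⟨cv, hcv⟩
  by_cases hck : cv < k
  · have hcs : cv + 1 < k + 1 := by omega
    have hvanish : ∀ j ∈ Finset.univ,
        j ∉ ({(⟨cv, hcv⟩ : Fin (k + 1)), ⟨cv + 1, hcs⟩} : Finset (Fin (k + 1))) →
        igoQ k a g i j * igoA (k + 1) a g j ⟨cv, hcv⟩ = 0 := by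
      intro j _ hj
      simp only [Finset.mem_insert, Finset.mem_singleton] at hj
      push_neg at hj
      have h1 : j ≠ ⟨cv, hcv⟩ := hj.1
      have h2 : ¬ ((j : ℕ) = cv + 1) := fun h => hj.2 (Fin.ext h)
      unfold igoA
      rw [if_neg h1, dif_neg h2, mul_zero]
    rw [← Finset.sum_subset (Finset.subset_univ _) hvanish,
      Finset.sum_pair (show (⟨cv, hcv⟩ : Fin (k + 1)) ≠ ⟨cv + 1, hcs⟩ by simp [Fin.ext_iff])]
    have hA1 : igoA (k + 1) a g ⟨cv, hcv⟩ ⟨cv, hcv⟩ = -a ⟨cv, hcv⟩ := if_pos rfl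
    have hA2 : igoA (k + 1) a g ⟨cv + 1, hcs⟩ ⟨cv, hcv⟩ = g ⟨cv, hck⟩ := by
      unfold igoA
      rw [if_neg (by simp [Fin.ext_iff]), dif_pos rfl]
    rw [hA1, hA2]
    by_cases hci : cv < (i : ℕ)
    · rw [igoQ_succ a g (c := ⟨cv, hcv⟩) hci hcs]
      have hgt : dext g cv = g ⟨cv, hck⟩ := dext_lt g hck
      have hat : dext a cv = a ⟨cv, hcv⟩ := dext_lt a hcv
      have hai : dext a (i : ℕ) = a i := dext_fin a i
      have hne : a ⟨cv, hcv⟩ - a i ≠ 0 := by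
        refine sub_ne_zero.mpr fun h => ?_
        have h3 : cv = (i : ℕ) := congrArg Fin.val (hinj h)
        omega
      rw [hgt, hat, hai]
      field_simp
      ring
    · by_cases hci2 : cv = (i : ℕ)
      · have hii : i = ⟨cv, hcv⟩ := Fin.ext hci2.symm
        subst hii
        rw [igoQ_diag, igoQ_zero a g (show (cv : ℕ) < cv + 1 by omega)]
        ring
      · rw [igoQ_zero a g (show (i : ℕ) < cv by omega),
          igoQ_zero a g (show (i : ℕ) < cv + 1 by omega)]
        ring
  · -- cv = k : last column
    rw [Finset.sum_eq_single (⟨cv, hcv⟩ : Fin (k + 1))]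
    · have hA1 : igoA (k + 1) a g ⟨cv, hcv⟩ ⟨cv, hcv⟩ = -a ⟨cv, hcv⟩ := if_pos rfl
      rw [hA1]
      by_cases hci : i = ⟨cv, hcv⟩
      · subst hci; ring
      · rw [igoQ_zero a g (show (i : ℕ) < cv by
          have := i.isLt
          exact lt_of_le_of_ne (by omega) (fun h => hci (Fin.ext h)))]
        ring
    · intro j _ hj
      have h2 : ¬ ((j : ℕ) = cv + 1) := by have := j.isLt; omega
      have : igoA (k + 1) a g j ⟨cv, hcv⟩ = 0 := by
        unfold igoA
        rw [if_neg hj, dif_neg h2]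
      rw [this, mul_zero]
    · intro h; exact absurd (Finset.mem_univ _) h

lemma igoQ_mul_igoP (hinj : Function.Injective a) :
    igoQ k a g * igoP k a g = 1 := by
  have hcomm : igoQ k a g * igoP k a g * Matrix.diagonal (fun i => -a i)
      = Matrix.diagonal (fun i => -a i) * (igoQ k a g * igoP k a g) := by
    calc igoQ k a g * igoP k a g * Matrix.diagonal (fun i => -a i)
        = igoQ k a g * (igoP k a g * Matrix.diagonal (fun i => -a i)) := by
          rw [Matrix.mul_assoc]
      _ = igoQ k a g * (igoA (k + 1) a g * igoP k a g) := by
          rw [igoA_mul_igoP a g hinj]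
      _ = igoQ k a g * igoA (k + 1) a g * igoP k a g := by rw [Matrix.mul_assoc]
      _ = Matrix.diagonal (fun i => -a i) * igoQ k a g * igoP k a g := by
          rw [igoQ_mul_igoA a g hinj]
      _ = Matrix.diagonal (fun i => -a i) * (igoQ k a g * igoP k a g) := by
          rw [Matrix.mul_assoc]
  ext i j
  by_cases hij : i = j
  · subst hij
    rw [Matrix.one_apply_eq, Matrix.mul_apply]
    rw [Finset.sum_eq_single i]
    · rw [igoP_diag, igoQ_diag, one_mul]
    · intro j _ hj
      rcases lt_or_gt_of_ne (fun h : (j : ℕ) = (i : ℕ) => hj (Fin.ext h)) with h | h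
      · rw [igoP_zero a g h, mul_zero]
      · rw [igoQ_zero a g h, zero_mul]
    · intro h; exact absurd (Finset.mem_univ _) h
  · have := congrFun (congrFun hcomm i) j
    rw [Matrix.mul_diagonal, Matrix.diagonal_mul] at this
    have hne : a j ≠ a i := fun h => hij (hinj h).symm
    have h0 : (igoQ k a g * igoP k a g) i j = 0 := by
      have h4 : (igoQ k a g * igoP k a g) i j * (a i - a j) = 0 := by linear_combination this
      rcases mul_eq_zero.mp h4 with h | h
      · exact h
      · exact absurd (sub_eq_zero.mp h).symm hne
    rw [h0, Matrix.one_apply_ne hij]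

end matrices2
/-! ### Final assembly -/

lemma prod_ite_one_erase {α : Type*} [Fintype α] [DecidableEq α] (j : α) (F : α → ℝ) :
    ∏ l, (if l = j then 1 else F l) = ∏ l ∈ Finset.univ.erase j, F l := by
  rw [← Finset.prod_erase (f := fun l => if l = j then (1:ℝ) else F l) Finset.univ (if_pos rfl)]
  exact Finset.prod_congr rfl fun l hl => if_neg (Finset.ne_of_mem_erase hl)

lemma aux_arith (gp gq dp dq e c : ℝ) (hdp : dp ≠ 0) (hdq : dq ≠ 0) (he : e ≠ 0)
    (hc : c ≠ 0) :
    (gp / dp) * e⁻¹ * (gq / dq) = c * (gp * gq) * (1 / e * (c * (dp * dq))⁻¹) := by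
  field_simp

lemma entry_extract {k : ℕ} (M : Matrix (Fin (k + 1)) (Fin (k + 1)) ℝ) :
    igoC (k + 1) ⬝ᵥ M.mulVec (igoB (k + 1)) = M (Fin.last k) 0 := by
  simp only [Matrix.mulVec, dotProduct, igoB, igoC]
  rw [Finset.sum_eq_single (Fin.last k)]
  · rw [if_pos (by simp), one_mul, Finset.sum_eq_single (0 : Fin (k + 1))]
    · simp
    · intro j _ hj
      have h0 : ¬ ((j : ℕ) = 0) := fun h => hj (Fin.ext h)
      simp [h0]
    · intro h; exact absurd (Finset.mem_univ _) h
  · intro i _ hi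
    simp only [Nat.add_sub_cancel]
    rw [if_neg (fun h => hi (Fin.ext (by simpa using h))), zero_mul]
  · intro h; exact absurd (Finset.mem_univ _) h

set_option maxHeartbeats 1000000

theorem stmt10 (k : ℕ) (a : Fin (k + 1) → ℝ) (g : Fin k → ℝ)
    (ha : ∀ i, 0 < a i) (hg : ∀ i, 0 < g i)
    (hdistinct : Function.Injective a) (ξ : ℝ) (hξ : 0 < ξ) :
    igoC (k + 1) ⬝ᵥ ((exp (-ξ • igoA (k + 1) a g) - 1)⁻¹ :
        Matrix (Fin (k + 1)) (Fin (k + 1)) ℝ).mulVec (igoB (k + 1)) =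
      (-ξ) ^ k * (∏ i, g i) *
        dividedDiff (fun x => 1 / (Real.exp x - 1)) k (fun i => ξ * a i) := by
  have hξ0 : ξ ≠ 0 := ne_of_gt hξ
  set P := igoP k a g with hPdef
  set Q := igoQ k a g with hQdef
  have hQP : Q * P = 1 := igoQ_mul_igoP a g hdistinct
  have hPQ : P * Q = 1 := mul_eq_one_comm.mp hQP
  have hPinv : P⁻¹ = Q := Matrix.inv_eq_right_inv hPQ
  have hPunit : IsUnit P := ⟨⟨P, Q, hPQ, hQP⟩, rfl⟩
  -- A = P D Q
  have hA : igoA (k + 1) a g = P * Matrix.diagonal (fun i => -a i) * Q := by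
    calc igoA (k + 1) a g = igoA (k + 1) a g * (P * Q) := by rw [hPQ, Matrix.mul_one]
      _ = igoA (k + 1) a g * P * Q := by rw [Matrix.mul_assoc]
      _ = P * Matrix.diagonal (fun i => -a i) * Q := by rw [igoA_mul_igoP a g hdistinct]
  -- -ξ • A = P (diag (ξ a)) Q
  have hdiag : (-ξ) • (Matrix.diagonal fun i : Fin (k + 1) => -a i)
      = Matrix.diagonal (fun i => ξ * a i) := by
    ext i j
    by_cases h : i = j
    · subst h
      simp only [Matrix.smul_apply, Matrix.diagonal_apply_eq, smul_eq_mul]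
      ring
    · simp [Matrix.diagonal_apply_ne _ h, h]
  have hsA : -ξ • igoA (k + 1) a g = P * Matrix.diagonal (fun i => ξ * a i) * Q := by
    rw [hA, ← Matrix.smul_mul, ← Matrix.mul_smul, hdiag]
  -- exp
  have hexp : exp (-ξ • igoA (k + 1) a g)
      = P * Matrix.diagonal (fun i => Real.exp (ξ * a i)) * Q := by
    have hexpdiag : exp (fun i : Fin (k + 1) => ξ * a i) = fun i => Real.exp (ξ * a i) := by
      funext i
      rw [Pi.coe_exp, Real.exp_eq_exp_ℝ]
    rw [hsA, ← hPinv, Matrix.exp_conj P _ hPunit, Matrix.exp_diagonal, hexpdiag]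
  -- exp - 1
  have hexp1 : exp (-ξ • igoA (k + 1) a g) - 1
      = P * Matrix.diagonal (fun i => Real.exp (ξ * a i) - 1) * Q := by
    rw [hexp]
    calc P * Matrix.diagonal (fun i => Real.exp (ξ * a i)) * Q - 1
        = P * Matrix.diagonal (fun i => Real.exp (ξ * a i)) * Q - P * 1 * Q := by
          rw [Matrix.mul_one, hPQ]
      _ = P * (Matrix.diagonal (fun i => Real.exp (ξ * a i)) - 1) * Q := by
          rw [Matrix.mul_sub, Matrix.sub_mul]
      _ = P * Matrix.diagonal (fun i => Real.exp (ξ * a i) - 1) * Q := by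
          rw [← Matrix.diagonal_one, Matrix.diagonal_sub]
  have hene : ∀ i : Fin (k + 1), Real.exp (ξ * a i) - 1 ≠ 0 := by
    intro i
    have : (1 : ℝ) < Real.exp (ξ * a i) := Real.one_lt_exp_iff.mpr (mul_pos hξ (ha i))
    linarith
  -- the inverse
  have hinv : (exp (-ξ • igoA (k + 1) a g) - 1)⁻¹
      = P * Matrix.diagonal (fun i => (Real.exp (ξ * a i) - 1)⁻¹) * Q := by
    apply Matrix.inv_eq_right_inv
    rw [hexp1]
    have e1 : P * Matrix.diagonal (fun i => Real.exp (ξ * a i) - 1) * Q *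
        (P * Matrix.diagonal (fun i => (Real.exp (ξ * a i) - 1)⁻¹) * Q)
        = P * (Matrix.diagonal (fun i => Real.exp (ξ * a i) - 1) * ((Q * P) *
            (Matrix.diagonal (fun i => (Real.exp (ξ * a i) - 1)⁻¹) * Q))) := by
      simp only [Matrix.mul_assoc]
    rw [e1, hQP, Matrix.one_mul, ← Matrix.mul_assoc, ← Matrix.mul_assoc,
      Matrix.mul_assoc P, Matrix.diagonal_mul_diagonal]
    have : (fun i => (Real.exp (ξ * a i) - 1) * (Real.exp (ξ * a i) - 1)⁻¹)
        = fun _ : Fin (k + 1) => (1 : ℝ) := by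
      funext i
      exact mul_inv_cancel₀ (hene i)
    rw [this, Matrix.diagonal_one, Matrix.mul_one, hPQ]
  rw [hinv, entry_extract, Matrix.mul_apply]
  simp_rw [Matrix.mul_diagonal]
  -- divided difference side
  have hxinj : Function.Injective (fun i : Fin (k + 1) => ξ * a i) :=
    fun i j h => hdistinct (mul_left_cancel₀ hξ0 h)
  rw [dividedDiff_lagrange _ k _ hxinj, Finset.mul_sum]
  apply Finset.sum_congr rfl
  intro j _
  -- per-term computation
  have hjk : (j : ℕ) ≤ k := by omega
  set jv := (j : ℕ) with hjv
  set Z := ∏ n ∈ Finset.range (k + 1), (if n = jv then 1 else (dext a n - dext a jv)) with hZ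
  -- lagW = (-ξ)^k * Z
  have hW : lagW (fun i => ξ * a i) j = (-ξ) ^ k * Z := by
    unfold lagW
    have step1 : ∏ l : Fin (k + 1), (if l = j then (1:ℝ) else (ξ * a j - ξ * a l))
        = ∏ l : Fin (k + 1),
            ((if l = j then 1 else (-ξ)) * (if l = j then 1 else (dext a l - dext a jv))) := by
      refine Finset.prod_congr rfl fun l _ => ?_
      by_cases h : l = j
      · simp [h]
      · rw [if_neg h, if_neg h, if_neg h, dext_fin, hjv, dext_fin]
        ring
    rw [step1, Finset.prod_mul_distrib]
    congr 1
    · rw [prod_ite_one_erase, Finset.prod_const, Finset.card_erase_of_mem (Finset.mem_univ _),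
        Finset.card_univ, Fintype.card_fin]
      norm_num
    · have hcg : ∀ l : Fin (k + 1), (if l = j then (1:ℝ) else (dext a l - dext a jv))
          = (if (l : ℕ) = jv then (1:ℝ) else (dext a (l : ℕ) - dext a jv)) := by
        intro l
        by_cases h : l = j
        · rw [if_pos h, if_pos (by rw [h])]
        · rw [if_neg h, if_neg (fun hh => h (Fin.ext hh))]
      calc ∏ l : Fin (k + 1), (if l = j then (1:ℝ) else (dext a l - dext a jv))
          = ∏ l : Fin (k + 1),
              (if (l : ℕ) = jv then (1:ℝ) else (dext a (l : ℕ) - dext a jv)) :=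
            Finset.prod_congr rfl fun l _ => hcg l
        _ = Z :=
            Fin.prod_univ_eq_prod_range
              (fun n => if n = jv then (1:ℝ) else (dext a n - dext a jv)) (k + 1)
  -- split products
  have hZsplit : (∏ l ∈ Finset.Ico jv k, (dext a (l + 1) - dext a jv)) *
      (∏ l ∈ Finset.Ico 0 jv, (dext a l - dext a jv)) = Z := by
    have e1 : (∏ l ∈ Finset.Ico jv k, (dext a (l + 1) - dext a jv))
        = ∏ l ∈ Finset.Ico (jv + 1) (k + 1), (dext a l - dext a jv) :=
      Finset.prod_Ico_add' (fun n => dext a n - dext a jv) jv k 1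
    have e2 : Z = (∏ l ∈ Finset.Ico 0 jv, (dext a l - dext a jv)) *
        ∏ l ∈ Finset.Ico (jv + 1) (k + 1), (dext a l - dext a jv) := by
      rw [hZ, Finset.range_eq_Ico,
        ← Finset.prod_Ico_consecutive _ (Nat.zero_le jv) (by omega : jv ≤ k + 1),
        Finset.prod_eq_prod_Ico_succ_bot (by omega : jv < k + 1), if_pos rfl, one_mul]
      congr 1
      · exact Finset.prod_congr rfl fun l hl =>
          if_neg (by simp only [Finset.mem_Ico] at hl; omega)
      · exact Finset.prod_congr rfl fun l hl =>
          if_neg (by simp only [Finset.mem_Ico] at hl; omega)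
    rw [e1, e2]
    ring
  have hgsplit : (∏ l ∈ Finset.Ico jv k, dext g l) * (∏ l ∈ Finset.Ico 0 jv, dext g l)
      = ∏ i, g i := by
    rw [mul_comm, Finset.prod_Ico_consecutive _ (Nat.zero_le jv) hjk,
      ← Finset.range_eq_Ico, ← Fin.prod_univ_eq_prod_range (dext g) k]
    exact Finset.prod_congr rfl fun i _ => dext_fin g i
  -- entries
  have hPe : P (Fin.last k) j
      = (∏ l ∈ Finset.Ico jv k, dext g l) /
        (∏ l ∈ Finset.Ico jv k, (dext a (l + 1) - dext a jv)) := by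
    rw [hPdef]
    unfold igoP
    rw [if_pos (by simp [Fin.val_last]; omega), Finset.prod_div_distrib]
    simp [Fin.val_last]
    rfl
  have hQe : Q j 0
      = (∏ l ∈ Finset.Ico 0 jv, dext g l) /
        (∏ l ∈ Finset.Ico 0 jv, (dext a l - dext a jv)) := by
    rw [hQdef]
    unfold igoQ
    rw [if_pos (by simp), Finset.prod_div_distrib]
    simp
    rfl
  -- nonvanishing
  have hane : ∀ n, n < k + 1 → n ≠ jv → dext a n - dext a jv ≠ 0 := by
    intro n hn hne
    rw [dext_lt a hn, hjv, dext_fin]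
    refine sub_ne_zero.mpr fun h => hne ?_
    have h2 := hdistinct h
    rw [hjv]
    exact congrArg Fin.val h2
  have hDPne : (∏ l ∈ Finset.Ico jv k, (dext a (l + 1) - dext a jv)) ≠ 0 := by
    apply Finset.prod_ne_zero_iff.mpr
    intro l hl
    simp only [Finset.mem_Ico] at hl
    exact hane (l + 1) (by omega) (by omega)
  have hDQne : (∏ l ∈ Finset.Ico 0 jv, (dext a l - dext a jv)) ≠ 0 := by
    apply Finset.prod_ne_zero_iff.mpr
    intro l hl
    simp only [Finset.mem_Ico] at hl
    exact hane l (by omega) (by omega)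
  have hξkne : ((-ξ) ^ k : ℝ) ≠ 0 := pow_ne_zero k (neg_ne_zero.mpr hξ0)
  rw [hPe, hQe, hW, ← hgsplit, ← hZsplit]
  exact aux_arith _ _ _ _ _ _ hDPne hDQne (hene j) hξkne
end

section
/- Let ψ(x) = x eˣ/(eˣ − 1)². Then for every x > 0, ψ(x) = Σ_{j=1}^∞ x j e^{−jx}, and for every integer k ≥ 0 the k-th derivative of ψ at x equals ψ^{(k)}(x) = (−1)^k Σ_{j=1}^∞ j^k (x j − k) e^{−jx}. -/
set_option maxHeartbeats 1000000

/-- The function `ψ(x) = x eˣ/(eˣ − 1)²`. -/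
noncomputable def psiIGO (x : ℝ) : ℝ := x * Real.exp x / (Real.exp x - 1) ^ 2

namespace StmtAux

open Real

/-- general derivative computation -/
lemma hasDerivAt_term (a b c y : ℝ) :
    HasDerivAt (fun z => c * (z * a - b) * Real.exp (-a * z))
      (-(c * a * (y * a - (b + 1)) * Real.exp (-a * y))) y := by
  have h1 : HasDerivAt (fun z : ℝ => c * (z * a - b)) (c * a) y := by
    simpa using (((hasDerivAt_id y).mul_const a).sub_const b).const_mul c
  have hl : HasDerivAt (fun z : ℝ => -a * z) (-a) y := by
    simpa using (hasDerivAt_id y).const_mul (-a)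
  have h2 : HasDerivAt (fun z : ℝ => Real.exp (-a * z)) (Real.exp (-a * y) * (-a)) y := hl.exp
  have := h1.mul h2
  exact this.congr_deriv (by ring)

lemma summable_pow_geom (m : ℕ) {r : ℝ} (hr0 : 0 ≤ r) (hr : r < 1) :
    Summable (fun j : ℕ => ((j : ℝ) + 1) ^ m * r ^ (j + 1)) := by
  have h : Summable (fun n : ℕ => (n : ℝ) ^ m * r ^ n) :=
    summable_pow_mul_geometric_of_norm_lt_one m (by rwa [Real.norm_eq_abs, abs_of_nonneg hr0])
  have := (summable_nat_add_iff 1).2 h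
  refine this.congr fun j => ?_
  push_cast
  ring

/-- key bound: for `1 ≤ a`, `0 < y`, `a*y*exp(-a*y) ≤ 2*exp(-a*y/2)` -/
lemma mul_exp_bound {a y : ℝ} (ha : 1 ≤ a) (hy : 0 < y) :
    a * y * Real.exp (-a * y) ≤ 2 * Real.exp (-(a * y) / 2) := by
  have hay : 0 < a * y := mul_pos (lt_of_lt_of_le one_pos ha) hy
  have h1 : a * y / 2 ≤ Real.exp (a * y / 2) := (Real.add_one_le_exp _).trans' (by linarith)
  have h2 : a * y ≤ 2 * Real.exp (a * y / 2) := by linarith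
  have h3 : Real.exp (-a * y) = Real.exp (-(a * y) / 2) * Real.exp (-(a * y) / 2) := by
    rw [← Real.exp_add]; ring_nf
  rw [h3]
  have h4 : Real.exp (a * y / 2) * Real.exp (-(a * y) / 2) = 1 := by
    rw [← Real.exp_add, show a * y / 2 + -(a * y) / 2 = 0 by ring, Real.exp_zero]
  calc a * y * (Real.exp (-(a * y) / 2) * Real.exp (-(a * y) / 2))
      ≤ 2 * Real.exp (a * y / 2) * (Real.exp (-(a * y) / 2) * Real.exp (-(a * y) / 2)) := by
        apply mul_le_mul_of_nonneg_right h2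
        positivity
    _ = 2 * Real.exp (-(a * y) / 2) * (Real.exp (a * y / 2) * Real.exp (-(a * y) / 2)) := by ring
    _ = 2 * Real.exp (-(a * y) / 2) := by rw [h4, mul_one]

lemma term_bound (k : ℕ) {t y : ℝ} (ht : 0 < t) (hy : t < y) (j : ℕ) :
    ‖((j : ℝ) + 1) ^ k * (y * ((j : ℝ) + 1) - (k : ℝ)) * Real.exp (-((j : ℝ) + 1) * y)‖
      ≤ ((k : ℝ) + 2) * (((j : ℝ) + 1) ^ k * Real.exp (-(t / 2)) ^ (j + 1)) := by
  set a : ℝ := (j : ℝ) + 1 with ha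
  have hj0 : (0:ℝ) ≤ (j : ℝ) := Nat.cast_nonneg j
  have ha1 : 1 ≤ a := by rw [ha]; linarith
  have hy0 : 0 < y := lt_trans ht hy
  have hexp : Real.exp (-(t / 2)) ^ (j + 1) = Real.exp (-(a * (t / 2))) := by
    rw [← Real.exp_nat_mul]
    congr 1
    push_cast [ha]
    ring
  rw [hexp, norm_mul, norm_mul, Real.norm_eq_abs, Real.norm_eq_abs, Real.norm_eq_abs,
    abs_of_nonneg (by positivity : (0:ℝ) ≤ a ^ k), Real.abs_exp, mul_assoc]
  have habs : |y * a - (k : ℝ)| ≤ y * a + (k : ℝ) := by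
    rw [abs_sub_le_iff]
    have hya : 0 < y * a := mul_pos hy0 (lt_of_lt_of_le one_pos ha1)
    have hk0 : (0:ℝ) ≤ (k : ℝ) := Nat.cast_nonneg k
    constructor <;> nlinarith [hya, hk0]
  have hbd : |y * a - (k : ℝ)| * Real.exp (-a * y) ≤ (2 + (k : ℝ)) * Real.exp (-(a * y) / 2) := by
    have h1 : a * y * Real.exp (-a * y) ≤ 2 * Real.exp (-(a * y) / 2) := mul_exp_bound ha1 hy0
    have h2 : Real.exp (-a * y) ≤ Real.exp (-(a * y) / 2) := by
      apply Real.exp_le_exp.2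
      nlinarith [mul_pos (lt_of_lt_of_le one_pos ha1) hy0]
    calc |y * a - (k : ℝ)| * Real.exp (-a * y)
        ≤ (y * a + (k : ℝ)) * Real.exp (-a * y) :=
          mul_le_mul_of_nonneg_right habs (Real.exp_nonneg _)
      _ = a * y * Real.exp (-a * y) + (k : ℝ) * Real.exp (-a * y) := by ring
      _ ≤ 2 * Real.exp (-(a * y) / 2) + (k : ℝ) * Real.exp (-(a * y) / 2) := by
          have := mul_le_mul_of_nonneg_left h2 (by positivity : (0:ℝ) ≤ (k : ℝ))
          linarith
      _ = (2 + (k : ℝ)) * Real.exp (-(a * y) / 2) := by ring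
  have hmono : Real.exp (-(a * y) / 2) ≤ Real.exp (-(a * (t / 2))) := by
    apply Real.exp_le_exp.2
    nlinarith [ha1, hy, ht]
  calc a ^ k * (|y * a - (k : ℝ)| * Real.exp (-a * y))
      ≤ a ^ k * ((2 + (k : ℝ)) * Real.exp (-(a * y) / 2)) := by
        apply mul_le_mul_of_nonneg_left hbd (by positivity)
    _ ≤ a ^ k * ((2 + (k : ℝ)) * Real.exp (-(a * (t / 2)))) := by
        apply mul_le_mul_of_nonneg_left _ (by positivity)
        exact mul_le_mul_of_nonneg_left hmono (by positivity)
    _ = ((k : ℝ) + 2) * (a ^ k * Real.exp (-(a * (t / 2)))) := by ring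

lemma summable_term (k : ℕ) {x : ℝ} (hx : 0 < x) :
    Summable (fun j : ℕ =>
      ((j : ℝ) + 1) ^ k * (x * ((j : ℝ) + 1) - (k : ℝ)) * Real.exp (-((j : ℝ) + 1) * x)) := by
  have hr1 : Real.exp (-(x / 2 / 2)) < 1 := Real.exp_lt_one_iff.2 (by linarith)
  exact Summable.of_norm_bounded
    ((summable_pow_geom k (Real.exp_nonneg _) hr1).mul_left ((k : ℝ) + 2))
    (term_bound k (show (0:ℝ) < x / 2 by linarith) (by linarith))

/-- the derivative of the series -/
lemma hasDerivAt_F_sum (k : ℕ) {x : ℝ} (hx : 0 < x) :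
    HasDerivAt (fun y => ∑' j : ℕ,
        ((j : ℝ) + 1) ^ k * (y * ((j : ℝ) + 1) - (k : ℝ)) * Real.exp (-((j : ℝ) + 1) * y))
      (∑' j : ℕ, -(((j : ℝ) + 1) ^ (k + 1) * (x * ((j : ℝ) + 1) - ((k + 1 : ℕ) : ℝ)) *
        Real.exp (-((j : ℝ) + 1) * x))) x := by
  have hr1 : Real.exp (-(x / 2 / 2)) < 1 := Real.exp_lt_one_iff.2 (by linarith)
  have hu : Summable (fun j : ℕ =>
      (((k + 1 : ℕ) : ℝ) + 2) * (((j : ℝ) + 1) ^ (k + 1) * Real.exp (-(x / 2 / 2)) ^ (j + 1))) :=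
    (summable_pow_geom (k + 1) (Real.exp_nonneg _) hr1).mul_left _
  refine hasDerivAt_tsum_of_isPreconnected
    (g := fun (j : ℕ) (y : ℝ) =>
      ((j : ℝ) + 1) ^ k * (y * ((j : ℝ) + 1) - (k : ℝ)) * Real.exp (-((j : ℝ) + 1) * y))
    (g' := fun (j : ℕ) (y : ℝ) =>
      -(((j : ℝ) + 1) ^ (k + 1) * (y * ((j : ℝ) + 1) - ((k + 1 : ℕ) : ℝ)) *
        Real.exp (-((j : ℝ) + 1) * y)))
    hu isOpen_Ioi (isPreconnected_Ioi)
    (fun j y hy => ?_) (fun j y hy => ?_) (show x ∈ Set.Ioi (x / 2) by simp; linarith)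
    (summable_term k hx) (show x ∈ Set.Ioi (x / 2) by simp; linarith)
  · have := hasDerivAt_term ((j : ℝ) + 1) (k : ℝ) (((j : ℝ) + 1) ^ k) y
    refine this.congr_deriv ?_
    push_cast
    ring
  · rw [norm_neg]
    exact term_bound (k + 1) (show (0:ℝ) < x / 2 by linarith) hy j

noncomputable def F (k : ℕ) (x : ℝ) : ℝ :=
  (-1) ^ k * ∑' j : ℕ,
    ((j : ℝ) + 1) ^ k * (x * ((j : ℝ) + 1) - (k : ℝ)) * Real.exp (-((j : ℝ) + 1) * x)

lemma F_eq (k : ℕ) : ∀ x : ℝ, 0 < x → iteratedDeriv k psiIGO x = F k x := by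
  induction k with
  | zero =>
    intro x hx
    rw [iteratedDeriv_zero]
    have hr0 : (0:ℝ) < Real.exp (-x) := Real.exp_pos _
    have hr1 : Real.exp (-x) < 1 := Real.exp_lt_one_iff.2 (by linarith)
    have hsum : (∑' n : ℕ, (n : ℝ) * Real.exp (-x) ^ n)
        = Real.exp (-x) / (1 - Real.exp (-x)) ^ 2 :=
      tsum_coe_mul_geometric_of_norm_lt_one
        (by rwa [Real.norm_eq_abs, abs_of_nonneg hr0.le])
    have hsummable : Summable (fun n : ℕ => (n : ℝ) * Real.exp (-x) ^ n) :=
      (summable_pow_mul_geometric_of_norm_lt_one 1 (by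
        rwa [Real.norm_eq_abs, abs_of_nonneg hr0.le])).congr (fun n => by rw [pow_one])
    have hshift : (∑' n : ℕ, (n : ℝ) * Real.exp (-x) ^ n)
        = ∑' j : ℕ, ((j : ℝ) + 1) * Real.exp (-x) ^ (j + 1) := by
      rw [hsummable.tsum_eq_zero_add]
      push_cast
      simp
    have hterm : ∀ j : ℕ, ((j : ℝ) + 1) ^ 0 * (x * ((j : ℝ) + 1) - ((0 : ℕ) : ℝ)) *
        Real.exp (-((j : ℝ) + 1) * x) = x * (((j : ℝ) + 1) * Real.exp (-x) ^ (j + 1)) := by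
      intro j
      rw [← Real.exp_nat_mul]
      push_cast
      ring_nf
    have hF : F 0 x = x * ∑' j : ℕ, ((j : ℝ) + 1) * Real.exp (-x) ^ (j + 1) := by
      rw [F]
      simp only [pow_zero, one_mul]
      rw [← tsum_mul_left]
      exact tsum_congr fun j => by simpa using hterm j
    rw [hF, ← hshift, hsum, psiIGO]
    have he1 : Real.exp x - 1 ≠ 0 := by
      have : (1:ℝ) < Real.exp x := Real.one_lt_exp_iff.2 hx
      linarith
    have he2 : (1:ℝ) - Real.exp (-x) ≠ 0 := by linarith
    have hee : Real.exp x * Real.exp (-x) = 1 := by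
      rw [← Real.exp_add]; simp
    field_simp
    linear_combination (Real.exp (-x) - Real.exp x) * hee
  | succ k ih =>
    intro x hx
    rw [iteratedDeriv_succ]
    have hev : iteratedDeriv k psiIGO =ᶠ[nhds x] F k :=
      Filter.eventuallyEq_of_mem (Ioi_mem_nhds hx) ih
    rw [hev.deriv_eq]
    have hd : HasDerivAt (F k) (F (k + 1) x) x := by
      have h1 := hasDerivAt_F_sum k hx
      have h2 := h1.const_mul ((-1 : ℝ) ^ k)
      refine h2.congr_deriv ?_
      rw [F, tsum_neg]
      ring
    exact hd.deriv

end StmtAux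

theorem stmt13 (x : ℝ) (hx : 0 < x) :
    psiIGO x = (∑' j : ℕ, x * ((j : ℝ) + 1) * Real.exp (-((j : ℝ) + 1) * x)) ∧
    ∀ k : ℕ, iteratedDeriv k psiIGO x =
      (-1) ^ k * ∑' j : ℕ,
        ((j : ℝ) + 1) ^ k * (x * ((j : ℝ) + 1) - (k : ℝ)) * Real.exp (-((j : ℝ) + 1) * x) := by
  constructor
  · have h := StmtAux.F_eq 0 x hx
    rw [iteratedDeriv_zero] at h
    rw [h, StmtAux.F]
    rw [pow_zero, one_mul]
    exact tsum_congr fun j => by push_cast; ring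
  · intro k
    exact StmtAux.F_eq k x hx
end
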